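/- Let ξ₀, ..., ξ_n be i.i.d. integer-valued random variables with |ξ₀| ≤ M almost surely and max_{x∈ℤ} P(ξ₀ = x) ≤ 1/2, and let P(z) = Σ_{j=0}^n ξ_j z^j. Then for every B > 0 there exists C > 0 such that for a ∈ {−2, 2}: P(|P(a)| ≤ n^{−C}·2^n) = O(n^{−B}). -/

import Mathlib

open MeasureTheory ProbabilityTheory
open scoped ENNReal

lemma geo_aux : ∀ (m e : ℕ), m ≤ e → (∑ j ∈ Finset.range m, (2:ℤ)^(e - j)) ≤ 2^(e+1) := by
  intro m
  induction m with
  | zero => intro e _; simp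
  | succ m ih =>
    intro e he
    rw [Finset.sum_range_succ']
    have h1 : ∀ j ∈ Finset.range m, (2:ℤ)^(e - (j+1)) = 2^((e-1) - j) := by
      intro j _; congr 1; omega
    rw [Finset.sum_congr rfl h1]
    have h2 := ih (e-1) (by omega)
    have h3 : (e - 1) + 1 = e := by omega
    rw [h3] at h2
    have : (2:ℤ)^(e-0) = 2^e := by norm_num
    rw [this]
    have h4 : (2:ℤ)^(e+1) = 2^e + 2^e := by ring
    omega

lemma sep_lemma (a : ℤ) (ha : a = 2 ∨ a = -2) (Mz : ℤ) (hMz : 1 ≤ Mz)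
    (d : ℕ) (hd1 : 1 ≤ d) (hd : 8 * Mz ≤ 2 ^ d) (k n : ℕ) (hkd : k * d ≤ n)
    (δ : ℕ → ℤ) (hδ : ∀ i < k, |δ i| ≤ 2 * Mz) (hne : ∃ i, i < k ∧ δ i ≠ 0) :
    (2:ℤ) ^ (n - k * d) ≤ |∑ i ∈ Finset.range k, δ i * a ^ (n - i * d)| := by
  have ha2 : |a| = 2 := by rcases ha with h | h <;> simp [h]
  classical
  set i₀ := Nat.find hne with hi₀def
  obtain ⟨hi₀k, hδi₀⟩ := Nat.find_spec hne
  have hmin : ∀ i < i₀, δ i = 0 := by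
    intro i hi
    by_contra h
    exact Nat.find_min hne hi ⟨lt_trans hi hi₀k, h⟩
  -- drop the zero prefix
  have hsplit : ∑ i ∈ Finset.range k, δ i * a ^ (n - i * d)
      = ∑ i ∈ Finset.Ico i₀ k, δ i * a ^ (n - i * d) := by
    rw [Finset.range_eq_Ico, ← Finset.sum_Ico_consecutive _ (Nat.zero_le i₀) hi₀k.le]
    have : ∑ i ∈ Finset.Ico 0 i₀, δ i * a ^ (n - i * d) = 0 := by
      apply Finset.sum_eq_zero
      intro i hi
      simp only [Finset.mem_Ico] at hi
      rw [hmin i hi.2]; ring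
    rw [this, zero_add]
  rw [hsplit, Finset.sum_eq_sum_Ico_succ_bot hi₀k]
  -- bound the tail
  set m := i₀ + 1 with hm
  have habs : ∀ (j : ℕ) (c : ℤ), |c * a ^ j| = |c| * 2 ^ j := by
    intro j c
    rw [abs_mul, abs_pow, ha2]
  have htail : |∑ i ∈ Finset.Ico m k, δ i * a ^ (n - i * d)|
      ≤ 2 * Mz * 2 ^ ((n - m * d) + 1) := by
    calc |∑ i ∈ Finset.Ico m k, δ i * a ^ (n - i * d)|
        ≤ ∑ i ∈ Finset.Ico m k, |δ i * a ^ (n - i * d)| := Finset.abs_sum_le_sum_abs _ _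
      _ ≤ ∑ i ∈ Finset.Ico m k, 2 * Mz * 2 ^ ((n - m * d) - (i - m)) := by
          apply Finset.sum_le_sum
          intro i hi
          simp only [Finset.mem_Ico] at hi
          rw [habs]
          have h1 : |δ i| ≤ 2 * Mz := hδ i hi.2
          have h2 : (2:ℤ) ^ (n - i * d) ≤ 2 ^ ((n - m * d) - (i - m)) := by
            apply pow_le_pow_right₀ (by norm_num)
            have hmi : m ≤ i := hi.1
            have e1 : m * d + (i - m) * d = i * d := by
              rw [← Nat.add_mul]; congr 1; omega
            have e2 : i - m ≤ (i - m) * d := Nat.le_mul_of_pos_right _ hd1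
            have e3 : i * d ≤ n := le_trans (Nat.mul_le_mul_right d hi.2.le) hkd
            omega
          have hp : (0:ℤ) < 2 ^ (n - i * d) := by positivity
          nlinarith [abs_nonneg (δ i)]
      _ = 2 * Mz * ∑ i ∈ Finset.Ico m k, 2 ^ ((n - m * d) - (i - m)) := by
          rw [Finset.mul_sum]
      _ ≤ 2 * Mz * 2 ^ ((n - m * d) + 1) := by
          apply mul_le_mul_of_nonneg_left _ (by linarith)
          rw [Finset.sum_Ico_eq_sum_range]
          have : ∀ j ∈ Finset.range (k - m), (2:ℤ) ^ ((n - m * d) - (m + j - m)) = 2 ^ ((n - m * d) - j) := by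
            intro j _; congr 1; omega
          rw [Finset.sum_congr rfl this]
          apply geo_aux
          have e1 : (k - m) * d = k * d - m * d := Nat.sub_mul k m d
          have e2 : k - m ≤ (k - m) * d := Nat.le_mul_of_pos_right _ hd1
          have e3 : m * d ≤ k * d := Nat.mul_le_mul_right d hi₀k
          omega
  have hhead : (2:ℤ) ^ (n - i₀ * d) ≤ |δ i₀ * a ^ (n - i₀ * d)| := by
    rw [habs]
    have h1 : (1:ℤ) ≤ |δ i₀| := Int.one_le_abs hδi₀
    nlinarith [pow_pos (by norm_num : (0:ℤ) < 2) (n - i₀ * d)]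
  have htri : |δ i₀ * a ^ (n - i₀ * d)| - |∑ i ∈ Finset.Ico m k, δ i * a ^ (n - i * d)|
      ≤ |δ i₀ * a ^ (n - i₀ * d) + ∑ i ∈ Finset.Ico m k, δ i * a ^ (n - i * d)| := by
    have := abs_sub_abs_le_abs_sub (δ i₀ * a ^ (n - i₀ * d))
      (-(∑ i ∈ Finset.Ico m k, δ i * a ^ (n - i * d)))
    simpa [sub_neg_eq_add] using this
  -- numeric conclusion
  have hmd : m * d ≤ n := by
    have : m * d ≤ k * d := Nat.mul_le_mul_right d hi₀k
    omega
  have hexp1 : n - i₀ * d = ((n - m * d) + 1) + (d - 1) := by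
    have e3 : i₀ * d + d = m * d := by rw [hm, Nat.add_mul, one_mul]
    omega
  have hexp2 : n - k * d ≤ (n - m * d) + 1 + (d-1) - 1 := by
    have e3 : m * d ≤ k * d := Nat.mul_le_mul_right d hi₀k
    omega
  -- 2^(n - i₀ d) = 2^(n-md+1) * 2^(d-1)  and 2^(d-1) ≥ 4 Mz
  have hMd : 4 * Mz ≤ 2 ^ (d - 1) := by
    have : (2:ℤ) * 2 ^ (d-1) = 2 ^ d := by
      rw [← pow_succ']
      congr 1; omega
    omega
  have hfinal : (2:ℤ) ^ (n - k * d) + 2 * Mz * 2 ^ ((n - m * d) + 1) ≤ 2 ^ (n - i₀ * d) := by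
    set P := (2:ℤ) ^ ((n - m * d) + 1) with hP
    set Q := (2:ℤ) ^ (d - 1) with hQ
    have hp1 : (0:ℤ) < P := by positivity
    have hq1 : (0:ℤ) < Q := by positivity
    have h2 : (2:ℤ) ^ (n - k * d) * 2 ≤ P * Q := by
      have e : (2:ℤ) ^ (n - k*d) * 2 = 2 ^ ((n - k*d) + 1) := by rw [pow_succ]
      rw [e, hP, hQ, ← pow_add]
      apply pow_le_pow_right₀ (by norm_num)
      omega
    have h4 : 2 * Mz * P * 2 ≤ P * Q := by nlinarith
    have h5 : (2:ℤ) ^ (n - i₀ * d) = P * Q := by rw [hexp1, pow_add]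
    linarith
  linarith [htri, hhead, htail]

lemma logk_lemma (A n : ℕ) (hA : 1 ≤ A) (hn : 4 * A ^ 2 ≤ n) :
    A * (Nat.log 2 n + 1) ≤ n := by
  have hn1 : 1 ≤ n := by nlinarith
  set L := Nat.log 2 n with hL
  have h1 : 2 ^ L ≤ n := Nat.pow_log_le_self 2 (by omega)
  have hs : 2 ^ (L / 2) ≤ Nat.sqrt n := by
    rw [Nat.le_sqrt]
    calc 2 ^ (L/2) * 2 ^ (L/2) = 2 ^ (L/2 + L/2) := (pow_add 2 _ _).symm
      _ ≤ 2 ^ L := Nat.pow_le_pow_right (by norm_num) (by omega)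
      _ ≤ n := h1
  have h2 : L + 1 ≤ 2 * Nat.sqrt n := by
    have h3 : L / 2 < 2 ^ (L / 2) := Nat.lt_two_pow_self
    omega
  have h3 : 2 * A ≤ Nat.sqrt n := by
    rw [Nat.le_sqrt]
    nlinarith
  calc A * (L + 1) ≤ A * (2 * Nat.sqrt n) := Nat.mul_le_mul_left A h2
    _ = (2 * A) * Nat.sqrt n := by ring
    _ ≤ Nat.sqrt n * Nat.sqrt n := Nat.mul_le_mul_right _ h3
    _ ≤ n := Nat.sqrt_le n

/-- For i.i.d. bounded integer coefficients with atoms ≤ 1/2, for every B > 0 there is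
C > 0 with P(|P(±2)| ≤ n^{-C} 2^n) = O(n^{-B}). -/
theorem stmt19 {Ω : Type*} [MeasureSpace Ω] [IsProbabilityMeasure (ℙ : Measure Ω)]
    (M : ℕ) (hM : 1 ≤ M) (ξ : ℕ → Ω → ℤ)
    (hmeas : ∀ i, Measurable (ξ i))
    (hindep : iIndepFun ξ ℙ)
    (hident : ∀ i, Measure.map (ξ i) ℙ = Measure.map (ξ 0) ℙ)
    (hbdd : ∀ i, ∀ᵐ ω ∂ℙ, |ξ i ω| ≤ (M : ℤ))
    (hatom : ∀ x : ℤ, ℙ {ω | ξ 0 ω = x} ≤ 1/2) :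
    ∀ B : ℝ, 0 < B → ∃ C K : ℝ, 0 < C ∧ 0 < K ∧
      ∀ n : ℕ, 1 ≤ n → ∀ a : ℤ, (a = 2 ∨ a = -2) →
        (ℙ {ω | ((|∑ j ∈ Finset.range (n+1), ξ j ω * a ^ j| : ℤ) : ℝ)
            ≤ (n : ℝ) ^ (-C) * 2 ^ n}).toReal
          ≤ K * (n : ℝ) ^ (-B) := by
  classical
  intro B hB
  set B' : ℕ := ⌈B⌉₊ with hB'def
  have hB'pos : 0 < B' := Nat.ceil_pos.mpr hB
  set d : ℕ := M + 3 with hddef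
  have hd1 : 1 ≤ d := by omega
  have hdM : 8 * M ≤ 2 ^ d := by
    have h1 : M < 2 ^ M := Nat.lt_two_pow_self (n := M)
    have : 2 ^ d = 8 * 2 ^ M := by rw [hddef, pow_add]; ring
    omega
  set A : ℕ := d * B' with hAdef
  have hA1 : 1 ≤ A := Nat.one_le_iff_ne_zero.mpr (by positivity)
  set N₀ : ℕ := 4 * A ^ 2 with hN₀def
  have hN₀4 : 4 ≤ N₀ := by
    have h : 1 ≤ A ^ 2 := Nat.one_le_pow _ _ hA1
    omega
  set Cn : ℕ := 2 * (B' * d) + 2 with hCndef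
  refine ⟨(Cn : ℝ), (N₀ : ℝ) ^ (B : ℝ), by positivity, by positivity, ?_⟩
  intro n hn a ha
  set ε : ℝ := (n : ℝ) ^ (-(Cn:ℝ)) * 2 ^ n with hεdef
  set E : Set Ω := {ω | ((|∑ j ∈ Finset.range (n+1), ξ j ω * a ^ j| : ℤ) : ℝ) ≤ ε} with hEdef
  have hn0 : (0:ℝ) < n := by exact_mod_cast hn
  have hprob_le_one : (ℙ E).toReal ≤ 1 := by
    have h := prob_le_one (μ := (ℙ : Measure Ω)) (s := E)
    calc (ℙ E).toReal ≤ (1 : ℝ≥0∞).toReal := ENNReal.toReal_mono (by simp) h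
      _ = 1 := by simp
  by_cases hcase : n < N₀
  · -- small n : trivial bound
    have h1 : (1:ℝ) ≤ (N₀ : ℝ) ^ (B:ℝ) * (n:ℝ) ^ (-B) := by
      have h2 : (n:ℝ) ^ (B:ℝ) ≤ (N₀ : ℝ) ^ (B:ℝ) :=
        Real.rpow_le_rpow (le_of_lt hn0) (by exact_mod_cast hcase.le) hB.le
      have h3 : (n:ℝ) ^ (B:ℝ) * (n:ℝ) ^ (-B) = 1 := by
        rw [← Real.rpow_add hn0, add_neg_cancel, Real.rpow_zero]
      have h4 : (0:ℝ) < (n:ℝ) ^ (-B) := Real.rpow_pos_of_pos hn0 _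
      nlinarith
    linarith
  push_neg at hcase
  set L := Nat.log 2 n with hLdef
  set k := B' * (L + 1) with hkdef
  have hk1 : 1 ≤ k := Nat.one_le_iff_ne_zero.mpr (by positivity)
  have hkd : k * d ≤ n := by
    have h := logk_lemma A n hA1 (by omega)
    calc k * d = A * (L + 1) := by rw [hkdef, hAdef]; ring
      _ ≤ n := h
  have hn2 : 2 ≤ n := by omega
  set e : ℕ → ℕ := fun i => n - i * d with hedef
  have hidn : ∀ i, i < k → i * d ≤ n := fun i hi =>
    le_trans (Nat.mul_le_mul_right d hi.le) hkd
  have hanti : ∀ i i', i < i' → i' < k → e i' < e i := by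
    intro i i' hii' hi'
    have h1 : i' * d ≤ n := hidn i' hi'
    have h2 : i * d + d ≤ i' * d := by
      calc i * d + d = (i+1) * d := by ring
        _ ≤ i' * d := Nat.mul_le_mul_right d hii'
    simp only [hedef]
    omega
  have heinj : ∀ i ∈ Finset.range k, ∀ i' ∈ Finset.range k, e i = e i' → i = i' := by
    intro i hi i' hi' h
    simp only [Finset.mem_range] at hi hi'
    rcases lt_trichotomy i i' with hlt | heq | hgt
    · exact absurd h.symm (Nat.ne_of_lt (hanti i i' hlt hi'))
    · exact heq
    · exact absurd h (Nat.ne_of_lt (hanti i' i hgt hi))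
  set J : Finset ℕ := (Finset.range k).image e with hJdef
  have hJcard : J.card = k := by
    rw [hJdef, Finset.card_image_of_injOn heinj, Finset.card_range]
  have hJsub : J ⊆ Finset.range (n+1) := by
    intro j hj
    simp only [hJdef, Finset.mem_image, Finset.mem_range] at hj ⊢
    obtain ⟨i, hi, rfl⟩ := hj
    simp only [hedef]
    omega
  set T : Ω → ℤ := fun ω => ∑ j ∈ J, ξ j ω * a ^ j with hTdef
  set R : Ω → ℤ := fun ω => ∑ j ∈ Finset.range (n+1) \ J, ξ j ω * a ^ j with hRdef
  have hTmeas : Measurable T := Finset.measurable_sum _ fun j _ => (hmeas j).mul_const _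
  have hRmeas : Measurable R := Finset.measurable_sum _ fun j _ => (hmeas j).mul_const _
  have hsum : ∀ ω, ∑ j ∈ Finset.range (n+1), ξ j ω * a ^ j = T ω + R ω := by
    intro ω
    simp only [hTdef, hRdef]
    rw [← Finset.sum_sdiff hJsub]
    exact add_comm _ _
  have hTe : ∀ ω, T ω = ∑ i ∈ Finset.range k, ξ (e i) ω * a ^ (e i) := by
    intro ω
    simp only [hTdef, hJdef]
    exact Finset.sum_image heinj
  have hindepTR : IndepFun T R ℙ := by
    have h := hindep.indepFun_finset J (Finset.range (n+1) \ J) Finset.disjoint_sdiff hmeas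
    have hφ : Measurable (fun v : J → ℤ => ∑ j ∈ J.attach, v j * a ^ (j:ℕ)) :=
      Finset.measurable_sum _ fun j _ => (measurable_pi_apply j).mul_const _
    have hψ : Measurable (fun v : (Finset.range (n+1) \ J : Finset ℕ) → ℤ =>
        ∑ j ∈ (Finset.range (n+1) \ J).attach, v j * a ^ (j:ℕ)) :=
      Finset.measurable_sum _ fun j _ => (measurable_pi_apply j).mul_const _
    have hT : T = (fun v : J → ℤ => ∑ j ∈ J.attach, v j * a ^ (j:ℕ)) ∘
        (fun ω (j : J) => ξ j ω) := by
      funext ω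
      simp only [Function.comp_apply]
      rw [hTdef]
      exact (Finset.sum_attach J (fun j => ξ j ω * a ^ j)).symm
    have hR : R = (fun v : (Finset.range (n+1) \ J : Finset ℕ) → ℤ =>
        ∑ j ∈ (Finset.range (n+1) \ J).attach, v j * a ^ (j:ℕ)) ∘
        (fun ω (j : (Finset.range (n+1) \ J : Finset ℕ)) => ξ j ω) := by
      funext ω
      simp only [Function.comp_apply]
      rw [hRdef]
      exact (Finset.sum_attach _ (fun j => ξ j ω * a ^ j)).symm
    rw [hT, hR]
    exact h.comp hφ hψ
  set G : Set Ω := {ω | ∀ j ∈ J, |ξ j ω| ≤ (M:ℤ)} with hGdef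
  have hGc : ℙ Gᶜ = 0 := by
    have hae : ∀ᵐ ω ∂(ℙ : Measure Ω), ω ∈ G := by
      rw [hGdef]
      exact (Filter.eventually_all_finset J).mpr (fun j _ => hbdd j)
    exact ae_iff.mp hae
  have hMz : (1:ℤ) ≤ (M:ℤ) := by exact_mod_cast hM
  have hdMz : 8 * (M:ℤ) ≤ 2 ^ d := by exact_mod_cast hdM
  have hsep : ∀ t s : ℕ → ℤ, (∀ i < k, |t i| ≤ (M:ℤ)) → (∀ i < k, |s i| ≤ (M:ℤ)) →
      ∑ i ∈ Finset.range k, t i * a ^ (e i) = ∑ i ∈ Finset.range k, s i * a ^ (e i) →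
      ∀ i < k, t i = s i := by
    intro t s ht hs hv
    by_contra hcon
    push_neg at hcon
    obtain ⟨i₁, hi₁, hne⟩ := hcon
    have hz : ∑ i ∈ Finset.range k, (t i - s i) * a ^ (n - i * d) = 0 := by
      have h1 : ∀ i ∈ Finset.range k, (t i - s i) * a ^ (n - i * d)
          = t i * a ^ (e i) - s i * a ^ (e i) := by
        intro i _
        simp only [hedef]
        ring
      rw [Finset.sum_congr rfl h1, Finset.sum_sub_distrib, hv, sub_self]
    have h := sep_lemma a ha (M:ℤ) hMz d hd1 hdMz k n hkd (fun i => t i - s i)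
      (fun i hi => by
        show |t i - s i| ≤ 2 * (M:ℤ)
        have h3 := abs_le.mp (ht i hi)
        have h4 := abs_le.mp (hs i hi)
        rw [abs_le]
        omega) ⟨i₁, hi₁, sub_ne_zero.mpr hne⟩
    rw [hz] at h
    simp only [abs_zero] at h
    have : (0:ℤ) < 2 ^ (n - k * d) := by positivity
    omega
  set V : Finset ℤ := Finset.image
      (fun t : Fin k → ℤ => ∑ i ∈ Finset.range k,
        (if h : i < k then t ⟨i, h⟩ else 0) * a ^ (e i))
      (Fintype.piFinset fun _ : Fin k => Finset.Icc (-(M:ℤ)) (M:ℤ)) with hVdef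
  have heJ : ∀ i, i < k → e i ∈ J := fun i hi =>
    Finset.mem_image.mpr ⟨i, Finset.mem_range.mpr hi, rfl⟩
  have hTV : ∀ ω ∈ G, T ω ∈ V := by
    intro ω hω
    rw [hVdef, Finset.mem_image]
    refine ⟨fun i => ξ (e i) ω, ?_, ?_⟩
    · rw [Fintype.mem_piFinset]
      intro i
      rw [Finset.mem_Icc]
      have h1 := hω (e i) (heJ i i.2)
      have h2 := abs_le.mp h1
      exact h2
    · rw [hTe ω]
      apply Finset.sum_congr rfl
      intro i hi
      rw [dif_pos (Finset.mem_range.mp hi)]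
  have hhalf : ∀ (j : ℕ) (c : ℤ), ℙ (ξ j ⁻¹' {c}) ≤ 1/2 := by
    intro j c
    have h1 : ℙ (ξ j ⁻¹' {c}) = Measure.map (ξ j) ℙ {c} :=
      (Measure.map_apply (hmeas j) (measurableSet_singleton c)).symm
    rw [h1, hident j, Measure.map_apply (hmeas 0) (measurableSet_singleton c)]
    have h2 : ξ 0 ⁻¹' {c} = {ω | ξ 0 ω = c} := by ext ω; simp
    rw [h2]
    exact hatom c
  have hatomTG : ∀ v : ℤ, ℙ (T ⁻¹' {v} ∩ G) ≤ (1/2 : ℝ≥0∞) ^ k := by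
    intro v
    rcases Set.eq_empty_or_nonempty (T ⁻¹' {v} ∩ G) with hem | ⟨ω₀, hω₀⟩
    · rw [hem]
      simp
    · obtain ⟨hω₀T, hω₀G⟩ := hω₀
      have hsub : T ⁻¹' {v} ∩ G ⊆ ⋂ j ∈ J, ξ j ⁻¹' {ξ j ω₀} := by
        rintro ω ⟨hωT, hωG⟩
        simp only [Set.mem_iInter]
        intro j hj
        obtain ⟨i, hik, rfl⟩ := Finset.mem_image.mp (hJdef ▸ hj)
        have hik' := Finset.mem_range.mp hik
        have heq := hsep (fun i => ξ (e i) ω) (fun i => ξ (e i) ω₀)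
          (fun i hi => hωG (e i) (heJ i hi)) (fun i hi => hω₀G (e i) (heJ i hi))
          (by
            rw [← hTe ω, ← hTe ω₀]
            have h1 : T ω = v := hωT
            have h2 : T ω₀ = v := hω₀T
            rw [h1, h2]) i hik'
        exact heq
      calc ℙ (T ⁻¹' {v} ∩ G) ≤ ℙ (⋂ j ∈ J, ξ j ⁻¹' {ξ j ω₀}) := measure_mono hsub
        _ = ∏ j ∈ J, ℙ (ξ j ⁻¹' {ξ j ω₀}) :=
            hindep.meas_biInter (fun j _ => ⟨{ξ j ω₀}, measurableSet_singleton _, rfl⟩)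
        _ ≤ ∏ _j ∈ J, (1/2 : ℝ≥0∞) := Finset.prod_le_prod' (fun j _ => hhalf j _)
        _ = (1/2 : ℝ≥0∞) ^ k := by rw [Finset.prod_const, hJcard]
  have hatomT : ∀ v : ℤ, ℙ (T ⁻¹' {v}) ≤ (1/2 : ℝ≥0∞) ^ k := by
    intro v
    calc ℙ (T ⁻¹' {v}) ≤ ℙ (T ⁻¹' {v} ∩ G) + ℙ (T ⁻¹' {v} \ G) :=
          measure_le_inter_add_diff _ _ _
      _ ≤ (1/2 : ℝ≥0∞) ^ k + 0 := by
          apply add_le_add (hatomTG v)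
          have h1 : T ⁻¹' {v} \ G ⊆ Gᶜ := fun ω hω => hω.2
          exact le_trans (measure_mono h1) (le_of_eq hGc)
      _ = (1/2 : ℝ≥0∞) ^ k := add_zero _
  -- numeric separation
  have hpowC : 2 ^ (k * d + 1) < n ^ Cn := by
    have h1 : 2 ^ L ≤ n := Nat.pow_log_le_self 2 (by omega)
    have hkd2 : k * d + 1 ≤ B' * d * L + (B' * d + 1) := by
      have h2 : k * d = B' * d * L + B' * d := by rw [hkdef]; ring
      omega
    calc 2 ^ (k * d + 1) ≤ 2 ^ (B' * d * L + (B' * d + 1)) :=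
          Nat.pow_le_pow_right (by norm_num) hkd2
      _ = (2 ^ L) ^ (B' * d) * 2 ^ (B' * d + 1) := by
          rw [← pow_mul, ← pow_add]
          ring_nf
      _ ≤ n ^ (B' * d) * n ^ (B' * d + 1) :=
          Nat.mul_le_mul (Nat.pow_le_pow_left h1 _) (Nat.pow_le_pow_left hn2 _)
      _ = n ^ (2 * (B' * d) + 1) := by
          rw [← pow_add]
          ring_nf
      _ < n ^ Cn := Nat.pow_lt_pow_right (by omega) (by omega)
  have hεsep : 2 * ε < (2:ℝ) ^ (n - k * d) := by
    have hC' : (2:ℝ) ^ (k * d + 1) < (n:ℝ) ^ (Cn:ℕ) := by exact_mod_cast hpowC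
    have hnC : (n:ℝ) ^ (-(Cn:ℝ)) = ((n:ℝ) ^ (Cn:ℕ))⁻¹ := by
      rw [← Real.rpow_natCast (n:ℝ) Cn, ← Real.rpow_neg (le_of_lt hn0)]
    have hnCpos : (0:ℝ) < (n:ℝ) ^ (Cn:ℕ) := by positivity
    have key : 2 * (2:ℝ) ^ n < (2:ℝ) ^ (n - k * d) * (n:ℝ) ^ (Cn:ℕ) := by
      have hsplit : (2:ℝ) ^ (n - k * d) * (2:ℝ) ^ (k * d + 1) = 2 * 2 ^ n := by
        rw [← pow_add]
        have h3 : n - k * d + (k * d + 1) = n + 1 := by omega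
        rw [h3, pow_succ]
        ring
      calc 2 * (2:ℝ) ^ n = (2:ℝ) ^ (n - k * d) * 2 ^ (k * d + 1) := hsplit.symm
        _ < (2:ℝ) ^ (n - k * d) * (n:ℝ) ^ (Cn:ℕ) := by
            apply mul_lt_mul_of_pos_left hC' (by positivity)
    rw [hεdef, hnC]
    rw [show (2:ℝ) * (((n:ℝ) ^ (Cn:ℕ))⁻¹ * 2 ^ n) = (2 * 2 ^ n) * ((n:ℝ) ^ (Cn:ℕ))⁻¹ by ring]
    rw [mul_inv_lt_iff₀ hnCpos]
    linarith [key]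
  have hVsep : ∀ v ∈ V, ∀ v' ∈ V, v ≠ v' → (2:ℤ) ^ (n - k * d) ≤ |v - v'| := by
    intro v hv v' hv' hvne
    rw [hVdef, Finset.mem_image] at hv hv'
    obtain ⟨t, ht, rfl⟩ := hv
    obtain ⟨s, hs, rfl⟩ := hv'
    set t' : ℕ → ℤ := fun i => if h : i < k then t ⟨i, h⟩ else 0 with ht'def
    set s' : ℕ → ℤ := fun i => if h : i < k then s ⟨i, h⟩ else 0 with hs'def
    have ht'b : ∀ i, |t' i| ≤ (M:ℤ) := by
      intro i
      simp only [ht'def]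
      by_cases h : i < k
      · rw [dif_pos h]
        have := Fintype.mem_piFinset.mp ht ⟨i, h⟩
        rw [Finset.mem_Icc] at this
        rw [abs_le]
        exact this
      · rw [dif_neg h]
        simp
    have hs'b : ∀ i, |s' i| ≤ (M:ℤ) := by
      intro i
      simp only [hs'def]
      by_cases h : i < k
      · rw [dif_pos h]
        have := Fintype.mem_piFinset.mp hs ⟨i, h⟩
        rw [Finset.mem_Icc] at this
        rw [abs_le]
        exact this
      · rw [dif_neg h]
        simp
    have hne' : ∃ i, i < k ∧ t' i - s' i ≠ 0 := by
      by_contra hcon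
      push_neg at hcon
      apply hvne
      apply Finset.sum_congr rfl
      intro i hi
      have h1 := hcon i (Finset.mem_range.mp hi)
      have h2 : t' i = s' i := by omega
      show t' i * a ^ (e i) = s' i * a ^ (e i)
      rw [h2]
    have h := sep_lemma a ha (M:ℤ) hMz d hd1 hdMz k n hkd (fun i => t' i - s' i)
      (fun i _ => by
        show |t' i - s' i| ≤ 2 * (M:ℤ)
        have h3 := abs_le.mp (ht'b i)
        have h4 := abs_le.mp (hs'b i)
        rw [abs_le]
        omega) hne'
    have hz : ∑ i ∈ Finset.range k, (t' i - s' i) * a ^ (n - i * d)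
        = (∑ i ∈ Finset.range k, t' i * a ^ (e i))
          - ∑ i ∈ Finset.range k, s' i * a ^ (e i) := by
      rw [← Finset.sum_sub_distrib]
      apply Finset.sum_congr rfl
      intro i _
      simp only [hedef]
      ring
    rw [hz] at h
    exact h
  set Sv : ℤ → Set ℤ := fun v => {r : ℤ | |(v:ℝ) + (r:ℝ)| ≤ ε} with hSvdef
  have hstep0 : ℙ E ≤ ℙ (E ∩ G) := by
    calc ℙ E ≤ ℙ (E ∩ G) + ℙ (E \ G) := measure_le_inter_add_diff _ _ _
      _ ≤ ℙ (E ∩ G) + 0 := by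
          apply add_le_add_right
          exact le_trans (measure_mono (fun ω hω => hω.2)) (le_of_eq hGc)
      _ = ℙ (E ∩ G) := add_zero _
  have hstep1 : E ∩ G ⊆ ⋃ v ∈ V, (T ⁻¹' {v} ∩ R ⁻¹' (Sv v)) := by
    rintro ω ⟨hωE, hωG⟩
    apply Set.mem_biUnion (hTV ω hωG)
    refine ⟨rfl, ?_⟩
    have h1 : ((|∑ j ∈ Finset.range (n+1), ξ j ω * a ^ j| : ℤ) : ℝ) ≤ ε := hωE
    rw [hsum ω] at h1
    rw [hSvdef]
    simp only [Set.mem_preimage, Set.mem_setOf_eq]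
    rw [Int.cast_abs] at h1
    push_cast at h1 ⊢
    exact h1
  have hstep2 : ℙ (E ∩ G) ≤ ∑ v ∈ V, ℙ (T ⁻¹' {v} ∩ R ⁻¹' (Sv v)) :=
    le_trans (measure_mono hstep1) (measure_biUnion_finset_le V _)
  have hstep3 : ∀ v : ℤ, ℙ (T ⁻¹' {v} ∩ R ⁻¹' (Sv v)) = ℙ (T ⁻¹' {v}) * ℙ (R ⁻¹' (Sv v)) :=
    fun v => hindepTR.measure_inter_preimage_eq_mul _ _ (measurableSet_singleton v)
      MeasurableSet.of_discrete
  have hdisj : (V : Set ℤ).PairwiseDisjoint (fun v => R ⁻¹' (Sv v)) := by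
    intro v hv v' hv' hvne
    rw [Function.onFun, Set.disjoint_left]
    intro ω hω hω'
    rw [hSvdef] at hω hω'
    simp only [Set.mem_preimage, Set.mem_setOf_eq] at hω hω'
    have h1 := hVsep v (Finset.mem_coe.mp hv) v' (Finset.mem_coe.mp hv') hvne
    have h2 : ((2:ℤ) ^ (n - k * d) : ℝ) ≤ |(v:ℝ) - (v':ℝ)| := by
      have : (((2:ℤ) ^ (n - k * d) : ℤ) : ℝ) ≤ ((|v - v'| : ℤ) : ℝ) := by exact_mod_cast h1
      rw [Int.cast_abs] at this
      push_cast at this ⊢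
      exact this
    have h3 : |(v:ℝ) - (v':ℝ)| ≤ 2 * ε := by
      have h4 := abs_add_le ((v:ℝ) + ((R ω : ℤ):ℝ)) (-((v':ℝ) + ((R ω : ℤ):ℝ)))
      rw [abs_neg] at h4
      have h5 : (v:ℝ) + ((R ω : ℤ):ℝ) + -((v':ℝ) + ((R ω : ℤ):ℝ)) = (v:ℝ) - (v':ℝ) := by ring
      rw [h5] at h4
      linarith [hω, hω']
    push_cast at h2
    linarith [hεsep, h2, h3]
  have hstep4 : ∑ v ∈ V, ℙ (R ⁻¹' (Sv v)) ≤ 1 := by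
    rw [← measure_biUnion_finset hdisj (fun v _ => hRmeas MeasurableSet.of_discrete)]
    exact prob_le_one
  have hfinal : ℙ E ≤ (1/2 : ℝ≥0∞) ^ k := by
    calc ℙ E ≤ ℙ (E ∩ G) := hstep0
      _ ≤ ∑ v ∈ V, ℙ (T ⁻¹' {v} ∩ R ⁻¹' (Sv v)) := hstep2
      _ = ∑ v ∈ V, ℙ (T ⁻¹' {v}) * ℙ (R ⁻¹' (Sv v)) := Finset.sum_congr rfl fun v _ => hstep3 v
      _ ≤ ∑ v ∈ V, (1/2 : ℝ≥0∞) ^ k * ℙ (R ⁻¹' (Sv v)) :=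
          Finset.sum_le_sum fun v _ => mul_le_mul_left (hatomT v) _
      _ = (1/2 : ℝ≥0∞) ^ k * ∑ v ∈ V, ℙ (R ⁻¹' (Sv v)) := (Finset.mul_sum _ _ _).symm
      _ ≤ (1/2 : ℝ≥0∞) ^ k * 1 := mul_le_mul_right hstep4 _
      _ = (1/2 : ℝ≥0∞) ^ k := mul_one _
  have htoReal : (ℙ E).toReal ≤ (1/2 : ℝ) ^ k := by
    have h1 := ENNReal.toReal_mono (by simp) hfinal
    rwa [ENNReal.toReal_pow, ENNReal.toReal_div, ENNReal.toReal_one, ENNReal.toReal_ofNat] at h1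
  have hk2 : (n:ℝ) ^ (B:ℝ) ≤ (2:ℝ) ^ k := by
    have h1 : (n:ℝ) ^ (B:ℝ) ≤ (n:ℝ) ^ ((B':ℕ):ℝ) :=
      Real.rpow_le_rpow_of_exponent_le (by exact_mod_cast hn) (by exact_mod_cast Nat.le_ceil B)
    have h2 : (n:ℝ) ^ ((B':ℕ):ℝ) = (n:ℝ) ^ (B':ℕ) := Real.rpow_natCast _ _
    have h3 : n ^ B' ≤ (2 ^ (L + 1)) ^ B' :=
      Nat.pow_le_pow_left (le_of_lt (Nat.lt_pow_succ_log_self (by norm_num) n)) B'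
    have h4 : (2 ^ (L + 1)) ^ B' = 2 ^ k := by rw [← pow_mul, hkdef]; ring_nf
    have h5 : (n:ℝ) ^ (B':ℕ) ≤ (2:ℝ) ^ k := by
      rw [h4] at h3
      exact_mod_cast h3
    calc (n:ℝ) ^ (B:ℝ) ≤ (n:ℝ) ^ ((B':ℕ):ℝ) := h1
      _ = (n:ℝ) ^ (B':ℕ) := h2
      _ ≤ (2:ℝ) ^ k := h5
  have hfin2 : (1/2 : ℝ) ^ k ≤ (n:ℝ) ^ (-B) := by
    rw [Real.rpow_neg (le_of_lt hn0), one_div, inv_pow]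
    exact inv_anti₀ (Real.rpow_pos_of_pos hn0 B) hk2
  have hK1 : (1:ℝ) ≤ (N₀:ℝ) ^ (B:ℝ) := by
    rw [show (1:ℝ) = (N₀:ℝ) ^ (0:ℝ) by rw [Real.rpow_zero]]
    apply Real.rpow_le_rpow_of_exponent_le (by exact_mod_cast (by omega : 1 ≤ N₀)) hB.le
  calc (ℙ E).toReal ≤ (1/2 : ℝ) ^ k := htoReal
    _ ≤ (n:ℝ) ^ (-B) := hfin2
    _ ≤ (N₀:ℝ) ^ (B:ℝ) * (n:ℝ) ^ (-B) :=
        le_mul_of_one_le_left (Real.rpow_nonneg (le_of_lt hn0) _) hK1
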